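/- Change of variables from output feedback to disturbance feedback: let K ∈ ℝ^{mN×pN} be such that K·G is nilpotent. Then I − K·G is invertible; setting Q := (I − K·G)^{-1}·K, the matrix Q·G is nilpotent, I + Q·G is invertible, (I + Q·G)^{-1}·Q = K, and J̃(Q) = J(K). -/

import Mathlib

open Matrix

noncomputable section

open scoped ComplexOrder in
/-- The positive semidefinite square root of a positive semidefinite matrix
(removed from Mathlib; restored with its old definition). -/
def Matrix.PosSemidef.sqrt {n 𝕜 : Type*} [Fintype n] [DecidableEq n] [RCLike 𝕜]
    {A : Matrix n n 𝕜} (hA : A.PosSemidef) : Matrix n n 𝕜 :=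
  hA.1.eigenvectorUnitary.1 * diagonal ((↑) ∘ (√·) ∘ hA.1.eigenvalues) *
  (star hA.1.eigenvectorUnitary : Matrix n n 𝕜)

/-- Squared Frobenius norm of a real matrix. -/
def frobSq {a b : Type*} [Fintype a] [Fintype b] (A : Matrix a b ℝ) : ℝ :=
  ∑ i, ∑ j, (A i j) ^ 2

/-- Squared Euclidean norm of a real vector. -/
def vecSq {a : Type*} [Fintype a] (v : a → ℝ) : ℝ :=
  ∑ i, (v i) ^ 2

/-- The finite-horizon LQG cost `J(K)` of the paper, written in terms of the
square roots `Msq = M^{1/2}`, `Swsq = Σw^{1/2}`, `Rsq = R^{1/2}`, `Svsq = Σv^{1/2}`. -/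
def Jcost {nn mm pp : ℕ}
    (P11 : Matrix (Fin nn) (Fin nn) ℝ) (P12 : Matrix (Fin nn) (Fin mm) ℝ)
    (C : Matrix (Fin pp) (Fin nn) ℝ)
    (Msq Swsq : Matrix (Fin nn) (Fin nn) ℝ)
    (Rsq : Matrix (Fin mm) (Fin mm) ℝ) (Svsq : Matrix (Fin pp) (Fin pp) ℝ)
    (μ : Fin nn → ℝ) (K : Matrix (Fin mm) (Fin pp) ℝ) : ℝ :=
  frobSq (Msq * (1 - P12 * K * C)⁻¹ * P11 * Swsq)
  + frobSq (Msq * P12 * K * (1 - C * P12 * K)⁻¹ * Svsq)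
  + frobSq (Rsq * K * (1 - C * P12 * K)⁻¹ * C * P11 * Swsq)
  + frobSq (Rsq * K * (1 - C * P12 * K)⁻¹ * Svsq)
  + vecSq ((Msq * (1 - P12 * K * C)⁻¹ * P11).mulVec μ)
  + vecSq ((Rsq * K * (1 - C * P12 * K)⁻¹ * C * P11).mulVec μ)

/-- The disturbance-feedback cost `J̃(Q)` of the paper, written in terms of the
square roots `Msq = M^{1/2}`, `Swsq = Σw^{1/2}`, `Rsq = R^{1/2}`, `Svsq = Σv^{1/2}`. -/
def Jtilde {nn mm pp : ℕ}
    (P11 : Matrix (Fin nn) (Fin nn) ℝ) (P12 : Matrix (Fin nn) (Fin mm) ℝ)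
    (C : Matrix (Fin pp) (Fin nn) ℝ)
    (Msq Swsq : Matrix (Fin nn) (Fin nn) ℝ)
    (Rsq : Matrix (Fin mm) (Fin mm) ℝ) (Svsq : Matrix (Fin pp) (Fin pp) ℝ)
    (μ : Fin nn → ℝ) (Q : Matrix (Fin mm) (Fin pp) ℝ) : ℝ :=
  frobSq (Msq * (1 + P12 * Q * C) * P11 * Swsq)
  + frobSq (Msq * P12 * Q * Svsq)
  + frobSq (Rsq * Q * C * P11 * Swsq)
  + frobSq (Rsq * Q * Svsq)
  + vecSq ((Rsq * Q * C * P11).mulVec μ)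
  + vecSq ((Msq * (1 + P12 * Q * C) * P11).mulVec μ)

end

/-- Nilpotency is preserved under swapping the factors of a (possibly rectangular)
matrix product. -/
lemma nilp_swap {a b : Type*} [Fintype a] [Fintype b] [DecidableEq a] [DecidableEq b]
    (A : Matrix a b ℝ) (B : Matrix b a ℝ) (h : IsNilpotent (A * B)) :
    IsNilpotent (B * A) := by
  obtain ⟨k, hk⟩ := h
  refine ⟨k + 1, ?_⟩
  have key : ∀ j, (B * A) ^ (j + 1) = B * (A * B) ^ j * A := by
    intro j
    induction j with
    | zero => simp [Matrix.mul_assoc]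
    | succ j ih =>
      rw [pow_succ, ih, pow_succ]
      simp only [Matrix.mul_assoc]
  rw [key, hk, Matrix.mul_zero, Matrix.zero_mul]

/-- Change of variables from output feedback to disturbance feedback:
if `K·G` is nilpotent (`G = C·P12`), then `I − K·G` is invertible; setting
`Q := (I − K·G)⁻¹·K`, the matrix `Q·G` is nilpotent, `I + Q·G` is invertible,
`(I + Q·G)⁻¹·Q = K`, and `J̃(Q) = J(K)`. -/
theorem output_to_disturbance_feedback {n m p N : ℕ}
    (hn : 0 < n) (hm : 0 < m) (hp : 0 < p) (hN : 0 < N)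
    (P11 : Matrix (Fin (n * (N + 1))) (Fin (n * (N + 1))) ℝ)
    (P12 : Matrix (Fin (n * (N + 1))) (Fin (m * N)) ℝ)
    (C : Matrix (Fin (p * N)) (Fin (n * (N + 1))) ℝ)
    {M W : Matrix (Fin (n * (N + 1))) (Fin (n * (N + 1))) ℝ}
    {R : Matrix (Fin (m * N)) (Fin (m * N)) ℝ}
    {V : Matrix (Fin (p * N)) (Fin (p * N)) ℝ}
    (hM : M.PosSemidef) (hW : W.PosSemidef) (hR : R.PosDef) (hV : V.PosDef)
    (μ : Fin (n * (N + 1)) → ℝ)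
    (G : Matrix (Fin (p * N)) (Fin (m * N)) ℝ) (hG : G = C * P12)
    (K : Matrix (Fin (m * N)) (Fin (p * N)) ℝ)
    (hK : IsNilpotent (K * G))
    (Q : Matrix (Fin (m * N)) (Fin (p * N)) ℝ) (hQ : Q = (1 - K * G)⁻¹ * K) :
    IsUnit (1 - K * G) ∧
    IsNilpotent (Q * G) ∧
    IsUnit (1 + Q * G) ∧
    (1 + Q * G)⁻¹ * Q = K ∧
    Jtilde P11 P12 C hM.sqrt hW.sqrt hR.posSemidef.sqrt hV.posSemidef.sqrt μ Q
      = Jcost P11 P12 C hM.sqrt hW.sqrt hR.posSemidef.sqrt hV.posSemidef.sqrt μ K := by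
  -- invertibility facts
  have hU1 : IsUnit (1 - K * G) := hK.isUnit_one_sub
  have hU1d : IsUnit (1 - K * G).det := (Matrix.isUnit_iff_isUnit_det _).mp hU1
  have hGK : IsNilpotent (G * K) := nilp_swap K G hK
  have hU2 : IsUnit (1 - G * K) := hGK.isUnit_one_sub
  have hU2d : IsUnit (1 - G * K).det := (Matrix.isUnit_iff_isUnit_det _).mp hU2
  have hKC : IsNilpotent (P12 * K * C) := by
    have h1 : IsNilpotent ((K * C) * P12) := by
      rw [Matrix.mul_assoc, ← hG]; exact hK
    have := nilp_swap (K * C) P12 h1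
    rwa [← Matrix.mul_assoc] at this
  -- basic identities for Q
  have hQK : (1 - K * G) * Q = K := by
    rw [hQ, ← Matrix.mul_assoc, Matrix.mul_nonsing_inv _ hU1d, Matrix.one_mul]
  have h1 : K * G * Q = Q - K := by
    conv_rhs => rw [← hQK]
    rw [Matrix.sub_mul, Matrix.one_mul]; abel
  -- push-through identity : K (1 - GK)⁻¹ = (1 - KG)⁻¹ K = Q
  have hswap : (1 - K * G) * K = K * (1 - G * K) := by
    rw [Matrix.sub_mul, Matrix.mul_sub, Matrix.one_mul, Matrix.mul_one, Matrix.mul_assoc]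
  have key1 : K * (1 - G * K)⁻¹ = Q := by
    rw [hQ]
    calc K * (1 - G * K)⁻¹
        = ((1 - K * G)⁻¹ * (1 - K * G)) * K * (1 - G * K)⁻¹ := by
          rw [Matrix.nonsing_inv_mul _ hU1d, Matrix.one_mul]
      _ = (1 - K * G)⁻¹ * (K * (1 - G * K)) * (1 - G * K)⁻¹ := by
          rw [Matrix.mul_assoc (1 - K * G)⁻¹, hswap]
      _ = (1 - K * G)⁻¹ * K := by
          rw [Matrix.mul_assoc, Matrix.mul_assoc, Matrix.mul_nonsing_inv _ hU2d,
            Matrix.mul_one]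
  -- the key right-inverse identity
  have hAB : P12 * K * C * (P12 * Q * C) = P12 * Q * C - P12 * K * C := by
    have h2 : K * (C * P12) * Q = Q - K := by rw [← hG]; exact h1
    calc P12 * K * C * (P12 * Q * C)
        = P12 * (K * (C * P12) * Q) * C := by simp only [Matrix.mul_assoc]
      _ = P12 * (Q - K) * C := by rw [h2]
      _ = P12 * Q * C - P12 * K * C := by rw [Matrix.mul_sub, Matrix.sub_mul]
  have e3 : (1 - P12 * K * C) * (1 + P12 * Q * C) = 1 := by
    rw [Matrix.mul_add, Matrix.mul_one, Matrix.sub_mul, Matrix.one_mul, hAB]; abel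
  have key2 : (1 - P12 * K * C)⁻¹ = 1 + P12 * Q * C := Matrix.inv_eq_right_inv e3
  -- (1 - KG)(1 + QG) = 1
  have e4 : (1 - K * G) * (1 + Q * G) = 1 := by
    rw [Matrix.sub_mul, Matrix.one_mul, Matrix.mul_add, Matrix.mul_one, ← Matrix.mul_assoc, h1, Matrix.sub_mul]
    abel
  have e4' : (1 + Q * G) * (1 - K * G) = 1 := mul_eq_one_comm.mp e4
  have hU3 : IsUnit (1 + Q * G) := ⟨⟨1 + Q * G, 1 - K * G, e4', e4⟩, rfl⟩
  have hrec : (1 + Q * G)⁻¹ * Q = K := by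
    rw [Matrix.inv_eq_left_inv e4, hQK]
  -- nilpotency of Q * G
  have hc : (K * G) * (1 - K * G)⁻¹ = (1 - K * G)⁻¹ * (K * G) := by
    calc (K * G) * (1 - K * G)⁻¹
        = ((1 - K * G)⁻¹ * (1 - K * G)) * (K * G) * (1 - K * G)⁻¹ := by
          rw [Matrix.nonsing_inv_mul _ hU1d, Matrix.one_mul]
      _ = (1 - K * G)⁻¹ * ((K * G) * (1 - K * G)) * (1 - K * G)⁻¹ := by
          have hcomm : (1 - K * G) * (K * G) = (K * G) * (1 - K * G) := by
            rw [Matrix.mul_sub, Matrix.sub_mul, Matrix.mul_one, Matrix.one_mul]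
          rw [Matrix.mul_assoc (1 - K * G)⁻¹ (1 - K * G) (K * G), hcomm]
      _ = (1 - K * G)⁻¹ * (K * G) := by
          rw [Matrix.mul_assoc, Matrix.mul_assoc, Matrix.mul_nonsing_inv _ hU1d,
            Matrix.mul_one]
  have hNQ : IsNilpotent (Q * G) := by
    have : Q * G = (K * G) * (1 - K * G)⁻¹ := by
      rw [hc, hQ, Matrix.mul_assoc]
    rw [this]
    exact (Commute.isNilpotent_mul_right hc hK)
  refine ⟨hU1, hNQ, hU3, hrec, ?_⟩
  -- cost equality
  have t2 : K * (1 - C * P12 * K)⁻¹ = Q := by rw [← hG]; exact key1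
  have tb : hM.sqrt * P12 * K * (1 - C * P12 * K)⁻¹ = hM.sqrt * P12 * Q := by
    rw [Matrix.mul_assoc, t2]
  have tc : hR.posSemidef.sqrt * K * (1 - C * P12 * K)⁻¹ = hR.posSemidef.sqrt * Q := by
    rw [Matrix.mul_assoc, t2]
  simp only [Jtilde, Jcost, key2, tb, tc]
  ring
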